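/- Let P0 be the joint law of a random pair (Z, E) taking values in 𝒵 × ℰ with Z real-valued and E_{P0}[e^{λZ}] < ∞ for every λ ∈ ℝ. Suppose the infimum inf_{λ∈ℝ} E_{P0}[ e^{λ E_{P0}[Z|E]} ] is attained at some λ* ∈ ℝ. Then the probability measure Q defined by dQ(z,e) = e^{λ* E_{P0}[Z|E=e]} / E_{P0}[ e^{λ* E_{P0}[Z|E]} ] dP0(z,e) attains the supremum defining the directional s-value; that is, Q(·|E=e) = P0(·|E=e) for all e ∈ ℰ, E_Q[Z] = 0, and exp(−D_KL(Q‖P0)) = inf_{λ∈ℝ} E_{P0}[ e^{λ E_{P0}[Z|E]} ]. -/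

import Mathlib

open MeasureTheory ProbabilityTheory Real
open scoped ENNReal NNReal Classical

/-- Kullback–Leibler divergence `D_KL(P‖P₀)`, valued in `ℝ≥0∞`: it is the integral
`∫ log (dP/dP₀) dP` when `P ≪ P₀` (and the integrand is integrable), and `+∞` otherwise. -/
noncomputable def KLdiv {α : Type*} [MeasurableSpace α] (P P₀ : Measure α) : ℝ≥0∞ :=
  if P ≪ P₀ ∧ Integrable (llr P P₀) P then ENNReal.ofReal (∫ x, llr P P₀ x ∂P) else ⊤

/-- `exp(−D_KL(P‖P₀))`, with the convention `exp(−∞) = 0`. -/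
noncomputable def expNegKL {α : Type*} [MeasurableSpace α] (P P₀ : Measure α) : ℝ :=
  if KLdiv P P₀ = ⊤ then 0 else Real.exp (-(KLdiv P P₀).toReal)

/-- The conditional distribution kernel `e ↦ P(· | E = e)` of the first coordinate `Z` given the
second coordinate `E`, for a finite measure `P` on a product space `𝒵 × ℰ`. -/
noncomputable def condKer {𝒵 ℰ : Type*} [MeasurableSpace 𝒵] [MeasurableSpace ℰ]
    [StandardBorelSpace 𝒵] [Nonempty 𝒵] (P : Measure (𝒵 × ℰ)) [IsFiniteMeasure P] :
    Kernel ℰ 𝒵 :=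
  haveI : IsFiniteMeasure (P.map Prod.swap) := Measure.isFiniteMeasure_map P Prod.swap
  (P.map Prod.swap).condKernel

/-- The statement that `P(· | E = e) = P₀(· | E = e)` for all `e`: the measure `P` on `𝒵 × ℰ`
is obtained from `P₀` by changing only the marginal distribution of the second coordinate `E`,
i.e. `P` (with coordinates swapped) is the composition of its `E`-marginal with the conditional
kernel of `P₀`. -/
def SameCondDist {𝒵 ℰ : Type*} [MeasurableSpace 𝒵] [MeasurableSpace ℰ]
    [StandardBorelSpace 𝒵] [Nonempty 𝒵] (P : Measure (𝒵 × ℰ)) (P₀ : Measure (𝒵 × ℰ))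
    [IsFiniteMeasure P₀] : Prop :=
  P.map Prod.swap = (P.map Prod.snd) ⊗ₘ condKer P₀

/-! ### Auxiliary real inequalities -/

lemma aux_abs_le_exp (x : ℝ) : |x| ≤ Real.exp x + Real.exp (-x) := by
  have h1 : |x| ≤ Real.exp |x| := by
    have := Real.add_one_le_exp |x|
    linarith
  rcases abs_cases x with ⟨h, _⟩ | ⟨h, _⟩
  · rw [h] at h1 ⊢; linarith [(Real.exp_pos (-x)).le]
  · rw [h] at h1 ⊢; linarith [(Real.exp_pos x).le]

lemma aux_sq_le_exp (x : ℝ) : x ^ 2 ≤ 2 * (Real.exp x + Real.exp (-x)) := by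
  have h1 : 1 + |x| + |x| ^ 2 / 2 ≤ Real.exp |x| := Real.quadratic_le_exp_of_nonneg (abs_nonneg x)
  have h2 : x ^ 2 = |x| ^ 2 := (sq_abs x).symm
  rcases abs_cases x with ⟨h, _⟩ | ⟨h, _⟩
  · rw [h] at h1; nlinarith [(Real.exp_pos (-x)).le, abs_nonneg x, h2, h]
  · rw [h] at h1; nlinarith [(Real.exp_pos x).le, abs_nonneg x, h2, h]

lemma aux_mul_exp_le {a b : ℝ} (x : ℝ) (h : |a - b| ≤ 1) :
    |x| * Real.exp (a * x) ≤
      Real.exp ((b + 2) * x) + 2 * Real.exp (b * x) + Real.exp ((b - 2) * x) := by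
  have h1 : |x| * Real.exp (a * x) ≤ Real.exp (|x| + a * x) := by
    rw [Real.exp_add]
    have hx : |x| ≤ Real.exp |x| := by
      have := Real.add_one_le_exp |x|; linarith
    exact mul_le_mul_of_nonneg_right hx (Real.exp_pos _).le
  have h2 : |x| + a * x ≤ b * x + 2 * |x| := by
    have hab : (a - b) * x ≤ |x| := by
      calc (a - b) * x ≤ |(a - b) * x| := le_abs_self _
        _ = |a - b| * |x| := abs_mul _ _
        _ ≤ 1 * |x| := mul_le_mul_of_nonneg_right h (abs_nonneg x)
        _ = |x| := one_mul _
    nlinarith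
  have h3 : Real.exp (b * x + 2 * |x|) ≤ Real.exp ((b + 2) * x) + Real.exp ((b - 2) * x) := by
    rcases abs_cases x with ⟨hx, _⟩ | ⟨hx, _⟩
    · rw [hx]
      have : b * x + 2 * x = (b + 2) * x := by ring
      rw [this]
      linarith [(Real.exp_pos ((b - 2) * x)).le]
    · rw [hx]
      have : b * x + 2 * -x = (b - 2) * x := by ring
      rw [this]
      linarith [(Real.exp_pos ((b + 2) * x)).le]
  calc |x| * Real.exp (a * x) ≤ Real.exp (|x| + a * x) := h1
    _ ≤ Real.exp (b * x + 2 * |x|) := Real.exp_le_exp.2 h2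
    _ ≤ Real.exp ((b + 2) * x) + Real.exp ((b - 2) * x) := h3
    _ ≤ _ := by linarith [(Real.exp_pos (b * x)).le]

lemma aux_convexOn (l : ℝ) : ConvexOn ℝ Set.univ fun x : ℝ => Real.exp (l * x) := by
  have := convexOn_exp.comp_affineMap ((l • (LinearMap.id : ℝ →ₗ[ℝ] ℝ)).toAffineMap)
  simpa [Function.comp_def, smul_eq_mul] using this

/-! ### Setup -/

section Aux
variable {ℰ : Type*} [MeasurableSpace ℰ] (P₀ : Measure (ℝ × ℰ)) [IsProbabilityMeasure P₀]

instance : IsProbabilityMeasure (P₀.map Prod.swap) :=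
  Measure.isProbabilityMeasure_map measurable_swap.aemeasurable

instance : IsProbabilityMeasure (P₀.map Prod.snd) :=
  Measure.isProbabilityMeasure_map measurable_snd.aemeasurable

instance : IsMarkovKernel (condKer P₀) := by
  unfold condKer; infer_instance

noncomputable def auxg (e : ℰ) : ℝ := ∫ z, z ∂(condKer P₀ e)

noncomputable def auxG (l : ℝ) (e : ℰ) : ℝ := ∫ z, Real.exp (l * z) ∂(condKer P₀ e)

noncomputable def auxH (e : ℰ) : ℝ := ∫ z, |z| ∂(condKer P₀ e)

lemma meas_g : Measurable (auxg P₀) :=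
  (measurable_snd.stronglyMeasurable :
    StronglyMeasurable fun q : ℰ × ℝ => q.2).integral_kernel_prod_right'.measurable

lemma meas_G (l : ℝ) : Measurable (auxG P₀ l) :=
  (((measurable_snd.const_mul l).exp).stronglyMeasurable :
    StronglyMeasurable fun q : ℰ × ℝ => Real.exp (l * q.2)).integral_kernel_prod_right'.measurable

lemma meas_H : Measurable (auxH P₀) :=
  ((measurable_snd.abs).stronglyMeasurable :
    StronglyMeasurable fun q : ℰ × ℝ => |q.2|).integral_kernel_prod_right'.measurable

lemma disint : P₀.map Prod.swap = (P₀.map Prod.snd) ⊗ₘ condKer P₀ := by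
  have h := (P₀.map Prod.swap).disintegrate (P₀.map Prod.swap).condKernel
  rw [Measure.fst_map_swap] at h
  rw [← h]; rfl

lemma integral_snd_eq (f : ℰ → ℝ) (hf : Measurable f) :
    ∫ p, f p.2 ∂P₀ = ∫ e, f e ∂(P₀.map Prod.snd) :=
  (integral_map measurable_snd.aemeasurable hf.aestronglyMeasurable).symm

lemma integrable_snd_iff (f : ℰ → ℝ) (hf : Measurable f) :
    Integrable (fun p => f p.2) P₀ ↔ Integrable f (P₀.map Prod.snd) :=
  (integrable_map_measure hf.aestronglyMeasurable measurable_snd.aemeasurable).symm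

lemma integrable_prod_iff (f : ℝ × ℰ → ℝ) (hf : Measurable f) :
    Integrable f P₀ ↔
      Integrable (fun q : ℰ × ℝ => f (q.2, q.1)) ((P₀.map Prod.snd) ⊗ₘ condKer P₀) := by
  rw [← disint P₀]
  exact Iff.symm (integrable_map_measure (g := fun q : ℰ × ℝ => f (q.2, q.1))
    (hf.comp measurable_swap).aestronglyMeasurable measurable_swap.aemeasurable)

lemma integral_prod_eq (f : ℝ × ℰ → ℝ) (hf : Measurable f)
    (hint : Integrable (fun q : ℰ × ℝ => f (q.2, q.1)) ((P₀.map Prod.snd) ⊗ₘ condKer P₀)) :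
    ∫ p, f p ∂P₀ = ∫ e, ∫ z, f (z, e) ∂(condKer P₀ e) ∂(P₀.map Prod.snd) := by
  rw [← Measure.integral_compProd hint, ← disint P₀]
  exact Iff.mpr eq_comm (integral_map (f := fun q : ℰ × ℝ => f (q.2, q.1))
    measurable_swap.aemeasurable (hf.comp measurable_swap).aestronglyMeasurable)

variable {P₀}

lemma aux_key (hmgf : ∀ l : ℝ, Integrable (fun p => Real.exp (l * p.1)) P₀) (l : ℝ) :
    (∀ᵐ e ∂(P₀.map Prod.snd), Integrable (fun z => Real.exp (l * z)) (condKer P₀ e)) ∧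
      Integrable (auxG P₀ l) (P₀.map Prod.snd) := by
  have hmeas : Measurable fun q : ℰ × ℝ => Real.exp (l * q.2) := (measurable_snd.const_mul l).exp
  have h1 : Integrable (fun q : ℰ × ℝ => Real.exp (l * q.2)) (P₀.map Prod.swap) := by
    rw [integrable_map_measure hmeas.aestronglyMeasurable measurable_swap.aemeasurable]
    exact hmgf l
  rw [disint P₀] at h1
  rw [Measure.integrable_compProd_iff hmeas.aestronglyMeasurable] at h1
  refine ⟨h1.1, h1.2.congr (Filter.Eventually.of_forall fun e => ?_)⟩
  simp only [auxG, Real.norm_eq_abs, abs_of_pos (Real.exp_pos _)]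

lemma aux_z_int (hmgf : ∀ l : ℝ, Integrable (fun p => Real.exp (l * p.1)) P₀) :
    ∀ᵐ e ∂(P₀.map Prod.snd), Integrable (fun z => z) (condKer P₀ e) := by
  filter_upwards [(aux_key hmgf 1).1, (aux_key hmgf (-1)).1] with e h1 h2
  refine (h1.add h2).mono' measurable_id.aestronglyMeasurable ?_
  filter_upwards with z
  simpa using aux_abs_le_exp z

lemma aux_sq_int (hmgf : ∀ l : ℝ, Integrable (fun p => Real.exp (l * p.1)) P₀) :
    ∀ᵐ e ∂(P₀.map Prod.snd), Integrable (fun z => z ^ 2) (condKer P₀ e) := by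
  filter_upwards [(aux_key hmgf 1).1, (aux_key hmgf (-1)).1] with e h1 h2
  refine ((h1.add h2).const_mul 2).mono' (measurable_id.pow_const 2).aestronglyMeasurable ?_
  filter_upwards with z
  have := aux_sq_le_exp z
  simpa [abs_of_nonneg (sq_nonneg z)] using this

lemma aux_jensen (hmgf : ∀ l : ℝ, Integrable (fun p => Real.exp (l * p.1)) P₀) (l : ℝ) :
    ∀ᵐ e ∂(P₀.map Prod.snd), Real.exp (l * auxg P₀ e) ≤ auxG P₀ l e := by
  filter_upwards [aux_z_int hmgf, (aux_key hmgf l).1] with e hz hl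
  exact (aux_convexOn l).map_integral_le
    ((Real.continuous_exp.comp (continuous_const.mul continuous_id)).continuousOn)
    isClosed_univ (by simp) hz hl

lemma aux_jensen_sq (hmgf : ∀ l : ℝ, Integrable (fun p => Real.exp (l * p.1)) P₀) :
    ∀ᵐ e ∂(P₀.map Prod.snd), auxH P₀ e ^ 2 ≤ 2 * (auxG P₀ 1 e + auxG P₀ (-1) e) := by
  filter_upwards [aux_z_int hmgf, aux_sq_int hmgf, (aux_key hmgf 1).1, (aux_key hmgf (-1)).1]
    with e hz hsq h1 h2
  have habs : Integrable (fun z => |z|) (condKer P₀ e) := hz.abs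
  have hsq' : Integrable (fun z => |z| ^ 2) (condKer P₀ e) :=
    hsq.congr (Filter.Eventually.of_forall fun z => (sq_abs z).symm)
  have hJ : auxH P₀ e ^ 2 ≤ ∫ z, |z| ^ 2 ∂(condKer P₀ e) := by
    have := (Even.convexOn_pow (even_two)).map_integral_le
      (continuous_pow 2).continuousOn isClosed_univ (μ := condKer P₀ e)
      (f := fun z => |z|) (by simp) habs hsq'
    simpa [auxH] using this
  have h2' : ∫ z, |z| ^ 2 ∂(condKer P₀ e) ≤ 2 * (auxG P₀ 1 e + auxG P₀ (-1) e) := by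
    have hle : ∀ z : ℝ, |z| ^ 2 ≤ 2 * (Real.exp (1 * z) + Real.exp ((-1) * z)) := by
      intro z
      have := aux_sq_le_exp z
      simpa [sq_abs] using this
    calc ∫ z, |z| ^ 2 ∂(condKer P₀ e)
        ≤ ∫ z, 2 * (Real.exp (1 * z) + Real.exp ((-1) * z)) ∂(condKer P₀ e) :=
          integral_mono hsq' ((h1.add h2).const_mul 2) hle
      _ = 2 * (auxG P₀ 1 e + auxG P₀ (-1) e) := by
          rw [integral_const_mul, integral_add h1 h2]; rfl
  linarith

lemma aux_exp_int (hmgf : ∀ l : ℝ, Integrable (fun p => Real.exp (l * p.1)) P₀) (l : ℝ) :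
    Integrable (fun e => Real.exp (l * auxg P₀ e)) (P₀.map Prod.snd) := by
  refine (aux_key hmgf l).2.mono' ((meas_g P₀).const_mul l).exp.aestronglyMeasurable ?_
  filter_upwards [aux_jensen hmgf l] with e he
  rwa [Real.norm_eq_abs, abs_of_pos (Real.exp_pos _)]

lemma aux_gexp_int (hmgf : ∀ l : ℝ, Integrable (fun p => Real.exp (l * p.1)) P₀) (c : ℝ) :
    Integrable (fun e => auxg P₀ e * Real.exp (c * auxg P₀ e)) (P₀.map Prod.snd) := by
  refine Integrable.mono' (((aux_exp_int hmgf (c + 2)).add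
    ((aux_exp_int hmgf c).const_mul 2)).add (aux_exp_int hmgf (c - 2)))
    ((meas_g P₀).mul ((meas_g P₀).const_mul c).exp).aestronglyMeasurable ?_
  filter_upwards with e
  rw [Real.norm_eq_abs, abs_mul, abs_of_pos (Real.exp_pos _)]
  have := aux_mul_exp_le (a := c) (b := c) (auxg P₀ e) (by simp)
  simp only [Pi.add_apply]
  linarith

lemma aux_Hexp_int (hmgf : ∀ l : ℝ, Integrable (fun p => Real.exp (l * p.1)) P₀) (c : ℝ) :
    Integrable (fun e => Real.exp (c * auxg P₀ e) * auxH P₀ e) (P₀.map Prod.snd) := by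
  refine Integrable.mono' (((aux_key hmgf (2 * c)).2.add
      (((aux_key hmgf 1).2.add (aux_key hmgf (-1)).2).const_mul 2)).div_const 2)
    (((meas_g P₀).const_mul c).exp.mul (meas_H P₀)).aestronglyMeasurable ?_
  filter_upwards [aux_jensen hmgf (2 * c), aux_jensen_sq hmgf] with e hJ hsq
  have hH : 0 ≤ auxH P₀ e := integral_nonneg fun z => abs_nonneg z
  have hu : 0 < Real.exp (c * auxg P₀ e) := Real.exp_pos _
  rw [Real.norm_eq_abs, abs_of_nonneg (by positivity)]
  have hsq' : Real.exp (c * auxg P₀ e) ^ 2 = Real.exp (2 * c * auxg P₀ e) := by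
    rw [sq, ← Real.exp_add]; ring_nf
  have h2 : Real.exp (2 * c * auxg P₀ e) ≤ auxG P₀ (2 * c) e := by
    have : (2 * c) * auxg P₀ e = 2 * c * auxg P₀ e := by ring
    rw [← this] at hJ ⊢; exact hJ
  simp only [Pi.add_apply]
  nlinarith [sq_nonneg (Real.exp (c * auxg P₀ e) - auxH P₀ e)]

lemma aux_A_zero (hmgf : ∀ l : ℝ, Integrable (fun p => Real.exp (l * p.1)) P₀) (lstar : ℝ)
    (hmin : ∀ l : ℝ, ∫ e, Real.exp (lstar * auxg P₀ e) ∂(P₀.map Prod.snd) ≤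
      ∫ e, Real.exp (l * auxg P₀ e) ∂(P₀.map Prod.snd)) :
    ∫ e, Real.exp (lstar * auxg P₀ e) * auxg P₀ e ∂(P₀.map Prod.snd) = 0 := by
  set μ := P₀.map Prod.snd
  set φ := fun l : ℝ => ∫ e, Real.exp (l * auxg P₀ e) ∂μ with hφ
  have hd : HasDerivAt φ (∫ e, Real.exp (lstar * auxg P₀ e) * auxg P₀ e ∂μ) lstar := by
    refine (hasDerivAt_integral_of_dominated_loc_of_deriv_le (s := Metric.ball lstar 1)
      (F := fun l e => Real.exp (l * auxg P₀ e))
      (F' := fun l e => Real.exp (l * auxg P₀ e) * auxg P₀ e) (Metric.ball_mem_nhds lstar one_pos)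
      (Filter.Eventually.of_forall fun l => ((meas_g P₀).const_mul l).exp.aestronglyMeasurable)
      (aux_exp_int hmgf lstar)
      ((((meas_g P₀).const_mul lstar).exp.mul (meas_g P₀)).aestronglyMeasurable)
      (bound := fun e => Real.exp ((lstar + 2) * auxg P₀ e) +
        2 * Real.exp (lstar * auxg P₀ e) + Real.exp ((lstar - 2) * auxg P₀ e))
      ?_ ?_ ?_).2
    · filter_upwards with e l hl
      rw [Real.norm_eq_abs, abs_mul, abs_of_pos (Real.exp_pos _), mul_comm]
      exact aux_mul_exp_le (auxg P₀ e)
        (by simpa [Real.dist_eq] using (Metric.mem_ball.mp hl).le)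
    · exact ((aux_exp_int hmgf (lstar + 2)).add
        ((aux_exp_int hmgf lstar).const_mul 2)).add (aux_exp_int hmgf (lstar - 2))
    · filter_upwards with e l hl
      simpa using (((hasDerivAt_id l).mul_const (auxg P₀ e)).exp)
  have hloc : IsLocalMin φ lstar := Filter.Eventually.of_forall fun l => hmin l
  exact hloc.hasDerivAt_eq_zero hd

lemma Q_map_snd (w : ℰ → ℝ≥0∞) (hw : Measurable w) :
    (P₀.withDensity (fun p => w p.2)).map Prod.snd = (P₀.map Prod.snd).withDensity w := by
  ext s hs
  rw [Measure.map_apply measurable_snd hs, withDensity_apply _ (hs.preimage measurable_snd),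
    withDensity_apply _ hs, setLIntegral_map hs hw measurable_snd]

lemma Q_map_swap (w : ℰ → ℝ≥0∞) (hw : Measurable w) :
    (P₀.withDensity (fun p => w p.2)).map Prod.swap
      = (P₀.map Prod.swap).withDensity (fun q => w q.1) := by
  ext s hs
  rw [Measure.map_apply measurable_swap hs, withDensity_apply _ (hs.preimage measurable_swap),
    withDensity_apply _ hs, setLIntegral_map (f := fun q : ℰ × ℝ => w q.1) hs
      (hw.comp measurable_fst) measurable_swap]
  rfl

lemma compProd_withDensity (μ : Measure ℰ) [SFinite μ] (κ : Kernel ℰ ℝ) [IsMarkovKernel κ]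
    (w : ℰ → ℝ≥0∞) (hw : Measurable w) [SFinite (μ.withDensity w)] :
    (μ ⊗ₘ κ).withDensity (fun q => w q.1) = (μ.withDensity w) ⊗ₘ κ := by
  ext s hs
  rw [withDensity_apply _ hs, Measure.compProd_apply hs,
    lintegral_withDensity_eq_lintegral_mul μ hw
      (ProbabilityTheory.Kernel.measurable_kernel_prodMk_left hs),
    ← lintegral_indicator hs,
    Measure.lintegral_compProd (f := s.indicator fun q : ℰ × ℝ => w q.1)
      ((hw.comp measurable_fst).indicator hs)]
  congr 1
  funext e
  have hind : ∀ z : ℝ, s.indicator (fun q : ℰ × ℝ => w q.1) (e, z)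
      = w e * (Prod.mk e ⁻¹' s).indicator (1 : ℝ → ℝ≥0∞) z := by
    intro z
    by_cases h : (e, z) ∈ s
    · simp [Set.indicator_of_mem h, Set.indicator_of_mem (Set.mem_preimage.2 h)]
    · simp [Set.indicator_of_notMem h, Set.indicator_of_notMem
        (fun hh => h (Set.mem_preimage.1 hh))]
  simp_rw [hind]
  rw [lintegral_const_mul _ (measurable_one.indicator (measurable_prodMk_left hs)),
    lintegral_indicator_one (measurable_prodMk_left hs)]
  rfl

end Aux

/-- if `inf_λ E_{P₀}[e^{λ E_{P₀}[Z|E]}]` is attained at `λ*`, then the tilted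
measure `dQ(z,e) = e^{λ* E_{P₀}[Z|E=e]} / E_{P₀}[e^{λ* E_{P₀}[Z|E]}] dP₀(z,e)` attains the
supremum defining the directional s-value: `Q(·|E=e) = P₀(·|E=e)` for all `e`, `E_Q[Z] = 0`,
and `exp(−D_KL(Q‖P₀)) = inf_λ E_{P₀}[e^{λ E_{P₀}[Z|E]}]`. -/
theorem tilted_measure_attains_directional_svalue {ℰ : Type*} [MeasurableSpace ℰ]
    (P₀ : Measure (ℝ × ℰ)) [IsProbabilityMeasure P₀]
    (hmgf : ∀ l : ℝ, Integrable (fun p => Real.exp (l * p.1)) P₀)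
    (lstar : ℝ)
    (hmin : ∀ l : ℝ, ∫ p, Real.exp (lstar * ∫ z, z ∂(condKer P₀ p.2)) ∂P₀
        ≤ ∫ p, Real.exp (l * ∫ z, z ∂(condKer P₀ p.2)) ∂P₀) :
    let Q : Measure (ℝ × ℰ) := P₀.withDensity
      (fun p => ENNReal.ofReal (Real.exp (lstar * ∫ z, z ∂(condKer P₀ p.2)) /
        ∫ q, Real.exp (lstar * ∫ z, z ∂(condKer P₀ q.2)) ∂P₀))
    IsProbabilityMeasure Q ∧ SameCondDist Q P₀ ∧
      Integrable (fun p => p.1) Q ∧ ∫ p, p.1 ∂Q = 0 ∧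
      expNegKL Q P₀ = ⨅ l : ℝ, ∫ p, Real.exp (l * ∫ z, z ∂(condKer P₀ p.2)) ∂P₀ := by
  intro Q
  have hg : Measurable (auxg P₀) := meas_g P₀
  set μ : Measure ℰ := P₀.map Prod.snd with hμdef
  set M : ℝ := ∫ p, Real.exp (lstar * auxg P₀ p.2) ∂P₀ with hMdef
  have hMφ : ∀ l : ℝ, (∫ p, Real.exp (l * auxg P₀ p.2) ∂P₀)
      = ∫ e, Real.exp (l * auxg P₀ e) ∂μ := fun l =>
    integral_snd_eq P₀ _ ((hg.const_mul l).exp)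
  have hmin' : ∀ l : ℝ, ∫ e, Real.exp (lstar * auxg P₀ e) ∂μ
      ≤ ∫ e, Real.exp (l * auxg P₀ e) ∂μ := by
    intro l
    rw [← hMφ lstar, ← hMφ l]
    exact hmin l
  have hA : ∫ e, Real.exp (lstar * auxg P₀ e) * auxg P₀ e ∂μ = 0 :=
    aux_A_zero hmgf lstar hmin'
  have hMpos : 0 < M := by
    rw [hMdef, hMφ lstar]
    refine (integral_pos_iff_support_of_nonneg_ae
      (Filter.Eventually.of_forall fun e => (Real.exp_pos _).le)
      (aux_exp_int hmgf lstar)).2 ?_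
    have hsupp : (Function.support fun e => Real.exp (lstar * auxg P₀ e)) = Set.univ := by
      ext e; simp [Function.support, (Real.exp_pos (lstar * auxg P₀ e)).ne']
    rw [hsupp]
    simp
  have hMone : M ≤ 1 := by
    have h0 := hmin 0
    have : (∫ p, Real.exp ((0:ℝ) * ∫ z, z ∂(condKer P₀ p.2)) ∂P₀) = 1 := by
      simp
    rw [this] at h0
    exact h0
  -- the density
  set d : ℰ → ℝ := fun e => Real.exp (lstar * auxg P₀ e) / M with hddef
  have hd : Measurable d := ((hg.const_mul lstar).exp).div_const M
  have hdnn : ∀ e, 0 ≤ d e := fun e => by positivity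
  have hdpos : ∀ e, 0 < d e := fun e => div_pos (Real.exp_pos _) hMpos
  set w : ℰ → ℝ≥0∞ := fun e => ENNReal.ofReal (d e) with hwdef
  have hw : Measurable w := ENNReal.measurable_ofReal.comp hd
  have hQw : Q = P₀.withDensity (fun p => w p.2) := rfl
  have hdd : Measurable (fun p : ℝ × ℰ => (d p.2).toNNReal) :=
    (hd.comp measurable_snd).real_toNNReal
  have hQdd : Q = P₀.withDensity (fun p => ((d p.2).toNNReal : ℝ≥0∞)) := rfl
  -- probability measure
  have hexpP : Integrable (fun p => Real.exp (lstar * auxg P₀ p.2)) P₀ :=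
    (integrable_snd_iff P₀ _ ((hg.const_mul lstar).exp)).2 (aux_exp_int hmgf lstar)
  have hdintP : Integrable (fun p => d p.2) P₀ := hexpP.div_const M
  have hQuniv : Q Set.univ = 1 := by
    rw [hQw, withDensity_apply _ MeasurableSet.univ, Measure.restrict_univ, hwdef]
    rw [← ofReal_integral_eq_lintegral_ofReal hdintP
      (Filter.Eventually.of_forall fun p => hdnn p.2)]
    have : ∫ p, d p.2 ∂P₀ = 1 := by
      rw [hddef]
      simp only [integral_div]
      rw [← hMdef, div_self hMpos.ne']
    rw [this, ENNReal.ofReal_one]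
  have hQprob : IsProbabilityMeasure Q := ⟨hQuniv⟩
  -- same conditional distribution
  have hsnd : Q.map Prod.snd = μ.withDensity w := Q_map_snd w hw
  haveI : IsProbabilityMeasure (Q.map Prod.snd) :=
    Measure.isProbabilityMeasure_map measurable_snd.aemeasurable
  haveI hsf : SFinite (μ.withDensity w) := by rw [← hsnd]; infer_instance
  have hSCD : SameCondDist Q P₀ := by
    show Q.map Prod.swap = (Q.map Prod.snd) ⊗ₘ condKer P₀
    rw [hsnd, hQw, Q_map_swap w hw, disint P₀, ← hμdef,
      compProd_withDensity μ (condKer P₀) w hw]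
  -- integrability of Z under Q
  have hmeas1 : Measurable (fun p : ℝ × ℰ => d p.2 * p.1) :=
    (hd.comp measurable_snd).mul measurable_fst
  have hmeas1' : Measurable (fun q : ℰ × ℝ => d q.1 * q.2) :=
    (hd.comp measurable_fst).mul measurable_snd
  have hHd : Integrable (fun e => d e * auxH P₀ e) μ := by
    refine ((aux_Hexp_int hmgf lstar).div_const M).congr
      (Filter.Eventually.of_forall fun e => ?_)
    rw [hddef]; ring
  have hint1' : Integrable (fun q : ℰ × ℝ => d q.1 * q.2) (μ ⊗ₘ condKer P₀) := by
    rw [Measure.integrable_compProd_iff hmeas1'.aestronglyMeasurable]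
    constructor
    · filter_upwards [aux_z_int hmgf] with e he
      exact he.const_mul _
    · refine hHd.congr (Filter.Eventually.of_forall fun e => ?_)
      have : ∀ z : ℝ, ‖d e * z‖ = d e * |z| := fun z => by
        rw [norm_mul, Real.norm_eq_abs, Real.norm_eq_abs, abs_of_nonneg (hdnn e)]
      simp_rw [this]
      rw [integral_const_mul]
      rfl
  have hint1 : Integrable (fun p : ℝ × ℰ => d p.2 * p.1) P₀ :=
    (integrable_prod_iff P₀ _ hmeas1).2 hint1'
  have hsmul : (fun p : ℝ × ℰ => (d p.2).toNNReal • p.1) = fun p => d p.2 * p.1 := by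
    funext p
    rw [NNReal.smul_def, smul_eq_mul, Real.coe_toNNReal _ (hdnn p.2)]
  have hZQ : Integrable (fun p : ℝ × ℰ => p.1) Q := by
    rw [hQdd, integrable_withDensity_iff_integrable_smul hdd]
    rw [hsmul]
    exact hint1
  -- expectation of Z under Q is zero
  have hdg : ∀ e, d e * auxg P₀ e = (Real.exp (lstar * auxg P₀ e) * auxg P₀ e) / M := by
    intro e; rw [hddef]; ring
  have hdgμ : ∫ e, d e * auxg P₀ e ∂μ = 0 := by
    simp_rw [hdg]
    rw [integral_div, hA, zero_div]
  have hEZ : ∫ p, p.1 ∂Q = 0 := by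
    rw [hQdd, integral_withDensity_eq_integral_smul hdd, hsmul,
      integral_prod_eq P₀ _ hmeas1 hint1']
    have hfib : ∀ e, (∫ z, (fun p : ℝ × ℰ => d p.2 * p.1) (z, e) ∂(condKer P₀ e))
        = d e * auxg P₀ e := by
      intro e
      rw [integral_const_mul (d e) (fun z : ℝ => z)]
      rfl
    simp_rw [hfib]
    exact hdgμ
  -- KL divergence
  have hac : Q ≪ P₀ := withDensity_absolutelyContinuous _ _
  have hrn : Q.rnDeriv P₀ =ᵐ[P₀] fun p => w p.2 := by
    rw [hQw]
    exact Measure.rnDeriv_withDensity P₀ (hw.comp measurable_snd)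
  have hllr : llr Q P₀ =ᵐ[Q] fun p => lstar * auxg P₀ p.2 - Real.log M := by
    refine hac.ae_le (hrn.mono fun p hp => ?_)
    simp only [llr_def, hp, hwdef, hddef]
    rw [ENNReal.toReal_ofReal (div_nonneg (Real.exp_pos _).le hMpos.le),
      Real.log_div (Real.exp_ne_zero _) hMpos.ne', Real.log_exp]
  have hgQint : Integrable (fun p : ℝ × ℰ => auxg P₀ p.2) Q := by
    rw [hQdd, integrable_withDensity_iff_integrable_smul hdd]
    have hsmul2 : (fun p : ℝ × ℰ => (d p.2).toNNReal • auxg P₀ p.2)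
        = fun p => d p.2 * auxg P₀ p.2 := by
      funext p
      rw [NNReal.smul_def, smul_eq_mul, Real.coe_toNNReal _ (hdnn p.2)]
    rw [hsmul2, integrable_snd_iff P₀ (fun e => d e * auxg P₀ e) (hd.mul hg)]
    refine ((aux_gexp_int hmgf lstar).div_const M).congr
      (Filter.Eventually.of_forall fun e => ?_)
    rw [hddef]; ring
  have hgQ : ∫ p, auxg P₀ p.2 ∂Q = 0 := by
    rw [hQdd, integral_withDensity_eq_integral_smul hdd]
    have hsmul2 : (fun p : ℝ × ℰ => (d p.2).toNNReal • auxg P₀ p.2)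
        = fun p => d p.2 * auxg P₀ p.2 := by
      funext p
      rw [NNReal.smul_def, smul_eq_mul, Real.coe_toNNReal _ (hdnn p.2)]
    rw [hsmul2, integral_snd_eq P₀ (fun e => d e * auxg P₀ e) (hd.mul hg)]
    exact hdgμ
  have hllrint : Integrable (llr Q P₀) Q :=
    ((hgQint.const_mul lstar).sub (integrable_const (Real.log M))).congr hllr.symm
  have hllrval : ∫ p, llr Q P₀ p ∂Q = - Real.log M := by
    rw [integral_congr_ae hllr,
      integral_sub (hgQint.const_mul lstar) (integrable_const _),
      integral_const, integral_const_mul, hgQ]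
    simp
  have hKL : KLdiv Q P₀ = ENNReal.ofReal (- Real.log M) := by
    rw [KLdiv, if_pos ⟨hac, hllrint⟩, hllrval]
  have hENK : expNegKL Q P₀ = M := by
    rw [expNegKL, hKL, if_neg ENNReal.ofReal_ne_top,
      ENNReal.toReal_ofReal (by linarith [Real.log_nonpos hMpos.le hMone]),
      neg_neg, Real.exp_log hMpos]
  have hiInf : (⨅ l : ℝ, ∫ p, Real.exp (l * auxg P₀ p.2) ∂P₀) = M := by
    refine le_antisymm (ciInf_le ⟨M, ?_⟩ lstar) (le_ciInf fun l => hmin l)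
    rintro x ⟨l, rfl⟩
    exact hmin l
  exact ⟨hQprob, hSCD, hZQ, hEZ, hENK.trans hiInf.symm⟩
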